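/- Let B be any bijection from the positive integers onto the set of all even binary partitions such that the sums |B_k| are nondecreasing in k. Then for every positive integer k, the sum |B_k| equals the smallest nonnegative integer n such that k \le b(n). -/

import Mathlib

/-- A binary partition: a multiset of parts, each a power of two. -/
def IsBinaryPartition (P : Multiset ℕ) : Prop := ∀ p ∈ P, ∃ k : ℕ, p = 2 ^ k

/-- An even binary partition: a multiset of parts, each a power of two that is at least 2. -/
def IsEvenBinaryPartition (P : Multiset ℕ) : Prop := ∀ p ∈ P, ∃ k : ℕ, 1 ≤ k ∧ p = 2 ^ k

/-- `b n` is the number of binary partitions of `n`. -/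
noncomputable def b (n : ℕ) : ℕ :=
  Nat.card {P : Multiset ℕ // P.sum = n ∧ IsBinaryPartition P}

lemma msum_le_msum {s t : Multiset ℕ} (h : s ≤ t) : s.sum ≤ t.sum := by
  obtain ⟨u, rfl⟩ := Multiset.le_iff_exists_add.1 h
  simp

open Multiset in
lemma finite_aux (m : ℕ) :
    {P : Multiset ℕ | P.sum ≤ m ∧ ∀ p ∈ P, 1 ≤ p}.Finite := by
  set M : Multiset ℕ := m • (Multiset.range (m+1)) with hM
  apply Set.Finite.subset (Multiset.finite_toSet M.powerset)
  intro P hP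
  obtain ⟨hsum, hpos⟩ := hP
  show P ∈ {x : Multiset ℕ | x ∈ M.powerset}
  rw [Set.mem_setOf_eq, Multiset.mem_powerset, Multiset.le_iff_count]
  intro a
  have hcount : count a P * a ≤ m := by
    calc count a P * a = (replicate (count a P) a).sum := by
          simp [Multiset.sum_replicate, mul_comm]
      _ = (P.filter (· = a)).sum := by rw [Multiset.filter_eq']
      _ ≤ P.sum := msum_le_msum (Multiset.filter_le _ _)
      _ ≤ m := hsum
  have hcM : count a M = m * (if a < m + 1 then 1 else 0) := by
    rw [hM, Multiset.count_nsmul]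
    congr 1
    rcases lt_or_ge a (m+1) with h|h
    · rw [if_pos h, Multiset.count_eq_one_of_mem (Multiset.nodup_range _) (Multiset.mem_range.2 h)]
    · rw [if_neg (Nat.not_lt.2 h), Multiset.count_eq_zero_of_notMem
        (fun hmem => absurd (Multiset.mem_range.1 hmem) (by omega))]
  rcases lt_or_ge a (m+1) with h|h
  · rcases Nat.eq_zero_or_pos a with rfl|ha
    · have h0 : count 0 P = 0 := Multiset.count_eq_zero.2 (fun hmem => by simpa using hpos 0 hmem)
      simp [hcM, h0]
    · have h1 : count a P ≤ count a P * a := Nat.le_mul_of_pos_right _ ha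
      simp only [hcM, h, if_true, mul_one]
      omega
  · have h0 : count a P = 0 := by
      by_contra h'
      have h1 : 1 ≤ count a P := Nat.one_le_iff_ne_zero.2 h'
      have : a ≤ count a P * a := by nlinarith
      omega
    simp [h0]

open Multiset in
/-- Binary partitions of `m` are in bijection with even binary partitions of sum ≤ `m`. -/
noncomputable def binEquiv (m : ℕ) :
    {Q : Multiset ℕ // Q.sum = m ∧ IsBinaryPartition Q} ≃
    {P : Multiset ℕ // P.sum ≤ m ∧ IsEvenBinaryPartition P} where
  toFun Q := ⟨Q.1.filter (· ≠ 1), by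
    constructor
    · calc (Q.1.filter (· ≠ 1)).sum ≤ Q.1.sum :=
            msum_le_msum (Multiset.filter_le _ _)
        _ = m := Q.2.1
    · intro p hp
      rw [Multiset.mem_filter] at hp
      obtain ⟨k, hk⟩ := Q.2.2 p hp.1
      refine ⟨k, ?_, hk⟩
      rcases Nat.eq_zero_or_pos k with rfl|h
      · exact absurd (by simpa using hk) hp.2
      · exact h⟩
  invFun P := ⟨P.1 + Multiset.replicate (m - P.1.sum) 1, by
    constructor
    · rw [Multiset.sum_add, Multiset.sum_replicate, smul_eq_mul, mul_one]
      have := P.2.1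
      omega
    · intro p hp
      rw [Multiset.mem_add] at hp
      rcases hp with hp|hp
      · obtain ⟨k, _, hk⟩ := P.2.2 p hp
        exact ⟨k, hk⟩
      · exact ⟨0, by simpa using Multiset.eq_of_mem_replicate hp⟩⟩
  left_inv Q := by
    ext1
    simp only
    have hsplit : Q.1.filter (· ≠ 1) + Q.1.filter (· = 1) = Q.1 := by
      have := Multiset.filter_add_not (fun a => a ≠ 1) Q.1
      simpa using this
    have heq : Q.1.filter (· = 1) = Multiset.replicate (count 1 Q.1) 1 :=
      Multiset.filter_eq' Q.1 1
    have hsum : (Q.1.filter (· ≠ 1)).sum + count 1 Q.1 = m := by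
      have : (Q.1.filter (· ≠ 1)).sum + (Q.1.filter (· = 1)).sum = m := by
        rw [← Multiset.sum_add, hsplit, Q.2.1]
      rwa [heq, Multiset.sum_replicate, smul_eq_mul, mul_one] at this
    rw [show m - (Q.1.filter (· ≠ 1)).sum = count 1 Q.1 by omega, ← heq, hsplit]
  right_inv P := by
    ext1
    simp only
    rw [Multiset.filter_add]
    have h1 : (Multiset.replicate (m - P.1.sum) 1).filter (· ≠ 1) = 0 := by
      rw [Multiset.filter_eq_nil]
      intro a ha
      simpa using Multiset.eq_of_mem_replicate ha
    have h2 : P.1.filter (· ≠ 1) = P.1 := by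
      rw [Multiset.filter_eq_self]
      intro a ha
      obtain ⟨k, hk1, hk2⟩ := P.2.2 a ha
      subst hk2
      have : 2 ≤ 2 ^ k := by
        calc 2 = 2 ^ 1 := rfl
          _ ≤ 2 ^ k := Nat.pow_le_pow_right (by norm_num) hk1
      omega
    rw [h1, h2, add_zero]

lemma b_subset_aux (m : ℕ) :
    {P : Multiset ℕ | P.sum = m ∧ IsBinaryPartition P} ⊆
      {P : Multiset ℕ | P.sum ≤ m ∧ ∀ p ∈ P, 1 ≤ p} := by
  rintro P ⟨h1, h2⟩
  refine ⟨le_of_eq h1, fun p hp => ?_⟩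
  obtain ⟨k, hk⟩ := h2 p hp
  subst hk
  exact Nat.one_le_two_pow

lemma even_subset_aux (m : ℕ) :
    {P : Multiset ℕ | P.sum ≤ m ∧ IsEvenBinaryPartition P} ⊆
      {P : Multiset ℕ | P.sum ≤ m ∧ ∀ p ∈ P, 1 ≤ p} := by
  rintro P ⟨h1, h2⟩
  refine ⟨h1, fun p hp => ?_⟩
  obtain ⟨k, _, hk⟩ := h2 p hp
  subst hk
  exact Nat.one_le_two_pow

lemma even_finite (m : ℕ) :
    {P : Multiset ℕ | P.sum ≤ m ∧ IsEvenBinaryPartition P}.Finite :=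
  (finite_aux m).subset (even_subset_aux m)

lemma b_eq_even_count (m : ℕ) :
    b m = Nat.card {P : Multiset ℕ // P.sum ≤ m ∧ IsEvenBinaryPartition P} :=
  Nat.card_congr (binEquiv m)

theorem sum_of_kth_term (B : ℕ+ → Multiset ℕ)
    (hparts : ∀ k, IsEvenBinaryPartition (B k))
    (hinj : Function.Injective B)
    (hsurj : ∀ P : Multiset ℕ, IsEvenBinaryPartition P → ∃ k, B k = P)
    (hmono : Monotone (fun k => (B k).sum)) :
    ∀ k : ℕ+, (B k).sum = sInf {n : ℕ | (k : ℕ) ≤ b n} := by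
  have key : ∀ (k : ℕ+) (m : ℕ), (B k).sum ≤ m ↔ (k : ℕ) ≤ b m := by
    intro k m
    set S : Set ℕ+ := {j : ℕ+ | (B j).sum ≤ m} with hS
    -- S is in bijection with even binary partitions of sum ≤ m
    have hbij : Nat.card S = Nat.card {P : Multiset ℕ // P.sum ≤ m ∧ IsEvenBinaryPartition P} := by
      apply Nat.card_congr
      refine Equiv.ofBijective (fun j => ⟨B j.1, j.2, hparts j.1⟩) ⟨?_, ?_⟩
      · intro a b hab
        simp only [Subtype.mk.injEq] at hab
        exact Subtype.ext (hinj hab)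
      · rintro ⟨P, hP1, hP2⟩
        obtain ⟨j, hj⟩ := hsurj P hP2
        exact ⟨⟨j, by simp [hS, hj, hP1]⟩, by simp [hj]⟩
    have hfin : S.Finite := by
      have : Finite {P : Multiset ℕ // P.sum ≤ m ∧ IsEvenBinaryPartition P} :=
        (even_finite m).to_subtype
      have : Finite S := Finite.of_equiv _
        (Equiv.ofBijective (fun j : S => (⟨B j.1, j.2, hparts j.1⟩ :
          {P : Multiset ℕ // P.sum ≤ m ∧ IsEvenBinaryPartition P})) ⟨by
            intro a b hab
            simp only [Subtype.mk.injEq] at hab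
            exact Subtype.ext (hinj hab), by
            rintro ⟨P, hP1, hP2⟩
            obtain ⟨j, hj⟩ := hsurj P hP2
            exact ⟨⟨j, by simp [hS, hj, hP1]⟩, by simp [hj]⟩⟩).symm
      exact Set.toFinite S
    have hlow : ∀ j j' : ℕ+, j ≤ j' → j' ∈ S → j ∈ S := by
      intro j j' hle hj'
      exact le_trans (hmono hle) hj'
    -- S is a lower set; it equals Icc 1 (ncard S) if nonempty
    have hcard : (k : ℕ) ≤ b m ↔ k ∈ S := by
      rw [b_eq_even_count, ← hbij, Nat.card_coe_set_eq]
      constructor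
      · intro hk
        have hne : S.Nonempty := by
          rw [Set.nonempty_iff_ne_empty]
          intro h
          rw [h] at hk
          simp at hk
        obtain ⟨Mx, hMx, hmax⟩ := Set.exists_max_image S id hfin hne
        have hsub : S = Set.Icc 1 Mx := by
          apply Set.Subset.antisymm
          · intro j hj
            exact ⟨j.one_le, hmax j hj⟩
          · intro j hj
            exact hlow j Mx hj.2 hMx
        rw [hsub] at hk
        rw [← Finset.coe_Icc, Set.ncard_coe_finset, PNat.card_Icc] at hk
        have he : ((1 : ℕ+) : ℕ) = 1 := rfl
        have h1 : 0 < (Mx : ℕ) := Mx.pos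
        have : (k : ℕ) ≤ (Mx : ℕ) := by omega
        rw [hsub]
        exact ⟨k.one_le, by exact_mod_cast this⟩
      · intro hk
        have hsub : Set.Icc 1 k ⊆ S := fun j hj => hlow j k hj.2 hk
        calc (k : ℕ) = (Set.Icc (1 : ℕ+) k).ncard := by
              rw [← Finset.coe_Icc, Set.ncard_coe_finset, PNat.card_Icc]
              simp
          _ ≤ S.ncard := Set.ncard_le_ncard hsub hfin
    exact hcard.symm
  intro k
  have hset : {n : ℕ | (k : ℕ) ≤ b n} = Set.Ici (B k).sum := by
    ext n
    simp only [Set.mem_setOf_eq, Set.mem_Ici]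
    exact (key k n).symm
  rw [hset, csInf_Ici]
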